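/- Let p ≥ 3 be an odd integer and q the multiplicative order of 2 modulo p. If binary words u and u′ satisfy val_p(u) = val_p(u′) and val_p(u·1) = val_p(u′·1), then |u| ≡ |u′| (mod q). (This is the insertion-of-carets step in the proof that leaves of a tree diagram in the p-colorable subgroup have lengths congruent modulo q.) -/
import Mathlib


/-- `val_p(a₁ ⋯ aₙ) = Σ_{i=1}^n aᵢ · (2⁻¹)^i ∈ ZMod p`, the reduction of
`ρ(a₁ ⋯ aₙ)` modulo `p`, defined recursively on the binary word. -/
def valp (p : ℕ) : List Bool → ZMod p
  | [] => 0
  | a :: t => ((if a then 1 else 0) + valp p t) * (2 : ZMod p)⁻¹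

lemma valp_append_true (p : ℕ) (u : List Bool) :
    valp p (u ++ [true]) = valp p u + ((2 : ZMod p)⁻¹) ^ (u.length + 1) := by
  induction u with
  | nil => simp [valp]
  | cons a t ih =>
    show ((if a then 1 else 0) + valp p (t ++ [true])) * (2 : ZMod p)⁻¹ = _
    rw [ih]
    simp only [valp, List.length_cons]
    ring

/-- Let `p ≥ 3` be an odd integer and `q` the multiplicative order of `2` modulo `p`.
If binary words `u` and `u′` satisfy `val_p(u) = val_p(u′)` and
`val_p(u·1) = val_p(u′·1)`, then `|u| ≡ |u′| (mod q)`. -/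
theorem length_modEq_of_valp_eq (p : ℕ) (hp3 : 3 ≤ p) (hodd : Odd p)
    (u u' : List Bool)
    (h : valp p u = valp p u')
    (h1 : valp p (u ++ [true]) = valp p (u' ++ [true])) :
    u.length ≡ u'.length [MOD orderOf (2 : ZMod p)] := by
  rw [valp_append_true, valp_append_true, h, add_left_cancel_iff] at h1
  have hcop : Nat.Coprime 2 p := by
    exact Nat.coprime_two_left.mpr hodd
  set w : (ZMod p)ˣ := ZMod.unitOfCoprime 2 hcop with hw
  have hwv : (w : ZMod p) = 2 := by simp [hw]
  have hinv : (2 : ZMod p)⁻¹ = ((w⁻¹ : (ZMod p)ˣ) : ZMod p) := by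
    rw [← hwv, ZMod.inv_coe_unit]
  rw [hinv, ← Units.val_pow_eq_pow_val, ← Units.val_pow_eq_pow_val] at h1
  have h2 : w⁻¹ ^ (u.length + 1) = w⁻¹ ^ (u'.length + 1) := Units.ext h1
  have h3 : u.length + 1 ≡ u'.length + 1 [MOD orderOf w⁻¹] :=
    (pow_eq_pow_iff_modEq).mp h2
  rw [orderOf_inv] at h3
  have h4 : orderOf w = orderOf (2 : ZMod p) := by
    rw [← hwv, orderOf_units]
  rw [h4] at h3
  exact Nat.ModEq.add_right_cancel' 1 h3
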